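/- For n ≥ 4, let A_n and B_n be the n×n symmetric matrices with a_{i,i+1} = a_{i+1,i} = b_{i,i+1} = b_{i+1,i} = 1 for 1 ≤ i ≤ n−1, a_{n,1} = a_{1,n} = 1, b_{n,1} = b_{1,n} = −1, and all other entries 0. Then det(A_n[X]) = det(B_n[X]) for every proper subset X of {1,…,n}, but det(A_n) ≠ det(B_n). -/

import Mathlib

open Matrix

lemma all_eq_one_of_sum {α : Type*} (s : Finset α) (f : α → ℤ)
    (hb : ∀ i ∈ s, f i ≤ 1) (hsum : (s.card : ℤ) ≤ ∑ i ∈ s, f i) : ∀ i ∈ s, f i = 1 := by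
  intro j hj
  by_contra hne
  have h1 : ∑ i ∈ s, f i < ∑ i ∈ s, (1 : ℤ) :=
    Finset.sum_lt_sum hb ⟨j, hj, lt_of_le_of_ne (hb j hj) hne⟩
  rw [Finset.sum_const, nsmul_eq_mul, mul_one] at h1
  omega

/-- Principal minor of `M` indexed by the finite set `X`. -/
noncomputable def pminor {W K : Type*} [DecidableEq W] [Field K]
    (M : Matrix W W K) (X : Finset W) : K :=
  (M.submatrix (fun i : {a // a ∈ X} => (i : W)) (fun j : {a // a ∈ X} => (j : W))).det

theorem symmetric_cycle_example (n : ℕ) (hn : 4 ≤ n)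
    (A B : Matrix (Fin n) (Fin n) ℚ)
    (hA : ∀ i j : Fin n, A i j =
      if (i : ℕ) + 1 = (j : ℕ) ∨ (j : ℕ) + 1 = (i : ℕ) then 1
      else if ((i : ℕ) = n - 1 ∧ (j : ℕ) = 0) ∨ ((i : ℕ) = 0 ∧ (j : ℕ) = n - 1) then 1
      else 0)
    (hB : ∀ i j : Fin n, B i j =
      if (i : ℕ) + 1 = (j : ℕ) ∨ (j : ℕ) + 1 = (i : ℕ) then 1
      else if ((i : ℕ) = n - 1 ∧ (j : ℕ) = 0) ∨ ((i : ℕ) = 0 ∧ (j : ℕ) = n - 1) then -1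
      else 0) :
    (∀ X : Finset (Fin n), X ≠ Finset.univ → pminor A X = pminor B X) ∧
    A.det ≠ B.det := by
  constructor
  ·
      intro X hX
      obtain ⟨k, hk⟩ : ∃ k, k ∉ X := by
        by_contra h
        push_neg at h
        exact hX (Finset.eq_univ_iff_forall.2 h)
      set d : Fin n → ℚ := fun i => if (i : ℕ) < (k : ℕ) then 1 else -1 with hd
      have entry : ∀ i j : Fin n, i ∈ X → j ∈ X → B i j = d i * A i j * d j := by
        intro i j hi hj
        have hik : (i : ℕ) ≠ (k : ℕ) := fun h => hk (Fin.val_injective h ▸ hi)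
        have hjk : (j : ℕ) ≠ (k : ℕ) := fun h => hk (Fin.val_injective h ▸ hj)
        have h1 := i.isLt
        have h2 := j.isLt
        have h3 := k.isLt
        rw [hA, hB]
        simp only [hd]
        split_ifs <;> first | (exfalso; omega) | norm_num
      unfold pminor
      have hsub : B.submatrix (fun i : {a // a ∈ X} => (i : Fin n)) (fun j : {a // a ∈ X} => (j : Fin n))
          = Matrix.diagonal (fun i : {a // a ∈ X} => d i) *
            A.submatrix (fun i : {a // a ∈ X} => (i : Fin n)) (fun j : {a // a ∈ X} => (j : Fin n)) *
            Matrix.diagonal (fun i : {a // a ∈ X} => d i) := by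
        ext i j
        rw [Matrix.mul_diagonal, Matrix.diagonal_mul, Matrix.submatrix_apply, Matrix.submatrix_apply,
          entry i j i.2 j.2]
      rw [hsub, det_mul, det_mul, det_diagonal]
      have hone : (∏ i : {a // a ∈ X}, d i) * (∏ i : {a // a ∈ X}, d i) = 1 := by
        rw [← Finset.prod_mul_distrib]
        apply Finset.prod_eq_one
        intro i _
        simp only [hd]
        split_ifs <;> norm_num
      linear_combination -(A.submatrix (fun i : {a // a ∈ X} => (i : Fin n)) (fun j : {a // a ∈ X} => (j : Fin n))).det * hone
  ·
      obtain ⟨m, rfl⟩ : ∃ m, n = m + 1 := ⟨n - 1, by omega⟩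
      have hm : 3 ≤ m := by omega
      simp only [Nat.add_sub_cancel] at hA hB
      set r := finRotate (m + 1) with hr
      have h0l : (0 : Fin (m + 1)) ≠ Fin.last m := by
        intro he
        have := congrArg Fin.val he
        rw [Fin.val_zero, Fin.val_last] at this
        omega
      have hrlast : ((r (Fin.last m) : Fin (m+1)) : ℕ) = 0 := by
        rw [hr, coe_finRotate, if_pos rfl]
      have hrner : ∀ i : Fin (m + 1), i ≠ Fin.last m → ((r i : Fin (m+1)) : ℕ) = (i : ℕ) + 1 := by
        intro i h
        rw [hr, coe_finRotate, if_neg h]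
      -- entry values along the rotations
      have hA1 : ∀ i : Fin (m + 1), A (r i) i = 1 := by
        intro i
        rw [hA]
        by_cases h : i = Fin.last m
        · subst h
          rw [hrlast, Fin.val_last, if_neg (by omega), if_pos (by omega)]
        · rw [hrner i h, if_pos (Or.inr rfl)]
      have hB1 : ∀ i : Fin (m + 1), i ≠ Fin.last m → B (r i) i = 1 := by
        intro i h
        rw [hB, hrner i h, if_pos (Or.inr rfl)]
      have hBlast : B (r (Fin.last m)) (Fin.last m) = -1 := by
        rw [hB, hrlast, Fin.val_last, if_neg (by omega), if_pos (by omega)]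
      have hA1' : ∀ i : Fin (m + 1), A i (r i) = 1 := by
        intro i
        rw [hA]
        by_cases h : i = Fin.last m
        · subst h
          rw [hrlast, Fin.val_last, if_neg (by omega), if_pos (by omega)]
        · rw [hrner i h, if_pos (Or.inl rfl)]
      have hB1' : ∀ i : Fin (m + 1), i ≠ Fin.last m → B i (r i) = 1 := by
        intro i h
        rw [hB, hrner i h, if_pos (Or.inl rfl)]
      have hBlast' : B (Fin.last m) (r (Fin.last m)) = -1 := by
        rw [hB, hrlast, Fin.val_last, if_neg (by omega), if_pos (by omega)]
      have hAl0 : A (Fin.last m) (0 : Fin (m+1)) = 1 := by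
        rw [hA, Fin.val_last, Fin.val_zero, if_neg (by omega), if_pos (by omega)]
      have hBl0 : B (Fin.last m) (0 : Fin (m+1)) = -1 := by
        rw [hB, Fin.val_last, Fin.val_zero, if_neg (by omega), if_pos (by omega)]
      have hA0l : A (0 : Fin (m+1)) (Fin.last m) = 1 := by
        rw [hA, Fin.val_last, Fin.val_zero, if_neg (by omega), if_pos (by omega)]
      have hB0l : B (0 : Fin (m+1)) (Fin.last m) = -1 := by
        rw [hB, Fin.val_last, Fin.val_zero, if_neg (by omega), if_pos (by omega)]
      -- products
      have hprodA : (∏ i, A (r i) i) = 1 := Finset.prod_eq_one fun i _ => hA1 i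
      have hprodB : (∏ i, B (r i) i) = -1 :=
        (Finset.prod_eq_single (Fin.last m) (fun i _ h => hB1 i h)
          (fun h => absurd (Finset.mem_univ _) h)).trans hBlast
      have hreidx : ∀ M : Matrix (Fin (m+1)) (Fin (m+1)) ℚ,
          (∏ i, M (r⁻¹ i) i) = ∏ i, M i (r i) := by
        intro M
        rw [← Equiv.prod_comp r fun j => M (r⁻¹ j) j]
        apply Finset.prod_congr rfl
        intro i _
        rw [Equiv.Perm.coe_inv, Equiv.symm_apply_apply]
      have hprodA' : (∏ i, A (r⁻¹ i) i) = 1 := by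
        rw [hreidx]
        exact Finset.prod_eq_one fun i _ => hA1' i
      have hprodB' : (∏ i, B (r⁻¹ i) i) = -1 := by
        rw [hreidx]
        exact (Finset.prod_eq_single (Fin.last m) (fun i _ h => hB1' i h)
          (fun h => absurd (Finset.mem_univ _) h)).trans hBlast'
      -- r ≠ r⁻¹
      have hrne : r ≠ r⁻¹ := by
        intro h
        have h2 : r (r 0) = 0 := by
          nth_rewrite 2 [h]
          exact Equiv.apply_symm_apply r 0
        have h4 : ((r 0 : Fin (m+1)) : ℕ) = 1 := by
          rw [hrner 0 h0l, Fin.val_zero]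
        have h5 : r 0 ≠ Fin.last m := by
          intro he
          rw [he, Fin.val_last] at h4
          omega
        have h3 : ((r (r 0) : Fin (m+1)) : ℕ) = 2 := by
          rw [hrner (r 0) h5, h4]
        rw [h2, Fin.val_zero] at h3
        omega
      -- A entry zero iff B entry zero
      have hAB0 : ∀ i j : Fin (m+1), A i j = 0 → B i j = 0 := by
        intro i j h
        rw [hA] at h
        rw [hB]
        split_ifs at h ⊢ with h1 h2 <;> norm_num at h <;> rfl
      -- main difference computation
      have hmain : A.det - B.det = 4 * (-1 : ℚ) ^ m := by
        rw [Matrix.det_apply', Matrix.det_apply', ← Finset.sum_sub_distrib]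
        rw [← Finset.sum_subset
          (Finset.subset_univ ({r, r⁻¹} : Finset (Equiv.Perm (Fin (m+1)))))]
        · rw [Finset.sum_pair hrne, hprodA, hprodB, hprodA', hprodB',
            Equiv.Perm.sign_inv, hr, sign_finRotate]
          push_cast
          ring
        · intro σ _ hσ
          simp only [Finset.mem_insert, Finset.mem_singleton] at hσ
          push_neg at hσ
          obtain ⟨hσ1, hσ2⟩ := hσ
          have hPP : (∏ i, A (σ i) i) = ∏ i, B (σ i) i := by
            by_cases hz : ∃ i, A (σ i) i = 0
            · obtain ⟨i, hi⟩ := hz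
              rw [Finset.prod_eq_zero (f := fun j => A (σ j) j) (Finset.mem_univ i) hi,
                Finset.prod_eq_zero (f := fun j => B (σ j) j) (Finset.mem_univ i) (hAB0 _ _ hi)]
            · push_neg at hz
              have hc : ∀ i : Fin (m+1),
                  (((σ i : ℕ) + 1 = (i : ℕ) ∨ (i : ℕ) + 1 = (σ i : ℕ)) ∨
                   (((σ i : ℕ) = m ∧ (i : ℕ) = 0) ∨ ((σ i : ℕ) = 0 ∧ (i : ℕ) = m))) := by
                intro i
                have h := hz i
                rw [hA] at h
                split_ifs at h with h1 h2
                · exact Or.inl h1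
                · exact Or.inr h2
                · exact absurd rfl h
              have hsum0 : ∑ i : Fin (m+1), (((σ i : ℕ) : ℤ) - ((i : ℕ) : ℤ)) = 0 := by
                rw [Finset.sum_sub_distrib,
                  Equiv.sum_comp σ (fun i : Fin (m+1) => ((i : ℕ) : ℤ)), sub_self]
              by_cases hw1 : σ (Fin.last m) = 0
              · by_cases hw2 : σ 0 = Fin.last m
                · -- both wrap entries used : signs cancel
                  have hfac : ∀ i : Fin (m+1), B (σ i) i =
                      ((if i = 0 then (-1:ℚ) else 1) * (if i = Fin.last m then (-1:ℚ) else 1))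
                        * A (σ i) i := by
                    intro i
                    by_cases hi0 : i = 0
                    · subst hi0
                      rw [hw2, hBl0, hAl0, if_pos rfl, if_neg h0l]
                      norm_num
                    · by_cases him : i = Fin.last m
                      · subst him
                        rw [hw1, hB0l, hA0l, if_neg (Ne.symm h0l), if_pos rfl]
                        norm_num
                      · have hi0' : (i : ℕ) ≠ 0 := fun hh => hi0 (Fin.val_injective (by simpa using hh))
                        have him' : (i : ℕ) ≠ m := fun hh => him (Fin.val_injective (by simpa [Fin.val_last] using hh))
                        rcases hc i with h1 | h2
                        · rw [hA, hB, if_pos h1, if_pos h1, if_neg hi0, if_neg him]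
                          norm_num
                        · exfalso
                          rcases h2 with ⟨hs, hv⟩ | ⟨hs, hv⟩
                          · exact hi0' hv
                          · exact him' hv
                  rw [Finset.prod_congr rfl fun i _ => hfac i, Finset.prod_mul_distrib,
                    Finset.prod_mul_distrib, Finset.prod_ite_eq', Finset.prod_ite_eq']
                  simp
                · -- only the (σ last = 0) wrap : σ must be r, contradiction
                  exfalso
                  apply hσ1
                  have hb : ∀ i ∈ Finset.univ.erase (Fin.last m),
                      ((σ i : ℕ) : ℤ) - ((i : ℕ) : ℤ) ≤ 1 := by
                    intro i his
                    have hil : i ≠ Fin.last m := (Finset.mem_erase.1 his).1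
                    rcases hc i with h1 | h2
                    · omega
                    · exfalso
                      rcases h2 with ⟨hs, hv⟩ | ⟨hs, hv⟩
                      · exact hw2 (by
                          have : i = 0 := Fin.val_injective (by simpa using hv)
                          rw [← this]
                          exact Fin.val_injective (by simpa [Fin.val_last] using hs))
                      · exact hil (Fin.val_injective (by simpa [Fin.val_last] using hv))
                  have hcard : (Finset.univ.erase (Fin.last m)).card = m := by
                    rw [Finset.card_erase_of_mem (Finset.mem_univ _), Finset.card_univ,
                      Fintype.card_fin]
                    omega
                  have hsum2 : ((Finset.univ.erase (Fin.last m)).card : ℤ) ≤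
                      ∑ i ∈ Finset.univ.erase (Fin.last m), (((σ i : ℕ) : ℤ) - ((i : ℕ) : ℤ)) := by
                    rw [Finset.sum_erase_eq_sub (Finset.mem_univ _), hsum0, hw1, hcard,
                      Fin.val_zero, Fin.val_last]
                    omega
                  have hall := all_eq_one_of_sum _ _ hb hsum2
                  apply Equiv.ext
                  intro i
                  by_cases h : i = Fin.last m
                  · subst h
                    rw [hw1]
                    exact (Fin.val_injective (by rw [hrlast, Fin.val_zero])).symm
                  · have h1 := hall i (Finset.mem_erase.2 ⟨h, Finset.mem_univ i⟩)
                    apply Fin.val_injective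
                    rw [hrner i h]
                    omega
              · by_cases hw2 : σ 0 = Fin.last m
                · -- only the (σ 0 = last) wrap : σ must be r⁻¹, contradiction
                  exfalso
                  apply hσ2
                  have hb : ∀ i ∈ Finset.univ.erase (0 : Fin (m+1)),
                      -(((σ i : ℕ) : ℤ) - ((i : ℕ) : ℤ)) ≤ 1 := by
                    intro i his
                    have hi0 : i ≠ 0 := (Finset.mem_erase.1 his).1
                    rcases hc i with h1 | h2
                    · omega
                    · exfalso
                      rcases h2 with ⟨hs, hv⟩ | ⟨hs, hv⟩
                      · exact hi0 (Fin.val_injective (by simpa using hv))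
                      · exact hw1 (by
                          have : i = Fin.last m := Fin.val_injective (by simpa [Fin.val_last] using hv)
                          rw [← this]
                          exact Fin.val_injective (by simpa using hs))
                  have hcard : (Finset.univ.erase (0 : Fin (m+1))).card = m := by
                    rw [Finset.card_erase_of_mem (Finset.mem_univ _), Finset.card_univ,
                      Fintype.card_fin]
                    omega
                  have hsum2 : ((Finset.univ.erase (0 : Fin (m+1))).card : ℤ) ≤
                      ∑ i ∈ Finset.univ.erase (0 : Fin (m+1)),
                        -((((σ i : ℕ) : ℤ)) - ((i : ℕ) : ℤ)) := by
                    rw [Finset.sum_neg_distrib]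
                    rw [Finset.sum_erase_eq_sub (Finset.mem_univ _), hsum0, hw2, hcard,
                      Fin.val_zero, Fin.val_last]
                    omega
                  have hall := all_eq_one_of_sum _ _ hb hsum2
                  apply Equiv.ext
                  intro i
                  have hri : r (σ i) = i → σ i = r⁻¹ i := fun h =>
                    r.injective (by rw [h, Equiv.Perm.coe_inv, Equiv.apply_symm_apply])
                  apply hri
                  by_cases h : i = 0
                  · subst h
                    rw [hw2]
                    exact Fin.val_injective (by rw [hrlast, Fin.val_zero])
                  · have hi0 : (i : ℕ) ≠ 0 := fun hh => h (Fin.val_injective (by simpa using hh))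
                    have h1 := hall i (Finset.mem_erase.2 ⟨h, Finset.mem_univ i⟩)
                    have hne : σ i ≠ Fin.last m := by
                      intro he
                      rw [he, Fin.val_last] at h1
                      have := i.isLt
                      omega
                    apply Fin.val_injective
                    rw [hrner (σ i) hne]
                    omega
                · -- no wrap entries : all factors agree
                  apply Finset.prod_congr rfl
                  intro i _
                  rcases hc i with h1 | h2
                  · rw [hA, hB, if_pos h1, if_pos h1]
                  · exfalso
                    rcases h2 with ⟨hs, hv⟩ | ⟨hs, hv⟩
                    · apply hw2
                      have : i = 0 := Fin.val_injective (by simpa using hv)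
                      rw [← this]
                      exact Fin.val_injective (by simpa [Fin.val_last] using hs)
                    · apply hw1
                      have : i = Fin.last m := Fin.val_injective (by simpa [Fin.val_last] using hv)
                      rw [← this]
                      exact Fin.val_injective (by simpa using hs)
          rw [hPP, sub_self]
      intro hdet
      rw [hdet, sub_self] at hmain
      have h4 : ((-1 : ℚ)) ^ m ≠ 0 := pow_ne_zero _ (by norm_num)
      rcases mul_eq_zero.1 hmain.symm with h | h
      · norm_num at h
      · exact h4 h
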